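/- Under the change of variables (ξ₁, ξ₂, ξ₃, ξ₄) = (1/q₁, q₂/q₁², 4q₂p₂ + 4q₂/q₁, p₁q₁² + q₂ + 2p₂q₁q₂), the Hamiltonian system for the Garnier system of type 5/2+3/2 with Hamiltonian H₁ = p₁² − (q₁² + t₁)p₁ − 2p₂q₁q₂ − q₂ − t₂/q₂ (with t₂ constant) transforms into the polynomial/rational system: ℏξ₁' = 1 + t₁ξ₁² − 2ξ₁²ξ₂ + ξ₁³ξ₃ − 2ξ₁⁴ξ₄, ℏξ₂' = 2t₁ξ₁ξ₂ − 4ξ₁ξ₂² + 2ξ₁²ξ₂ξ₃ − 4ξ₁³ξ₂ξ₄, ℏξ₃' = 4t₁ξ₂ − 8ξ₂² + 4ξ₁ξ₂ξ₃ − 8ξ₁²ξ₂ξ₄ − 4t₂ξ₁²/ξ₂, ℏξ₄' = t₁ξ₃/2 + ξ₁ξ₃²/2 − ξ₂ξ₃ − 2t₁ξ₁ξ₄ + 4ξ₁ξ₂ξ₄ − 3ξ₁²ξ₃ξ₄ + 4ξ₁³ξ₄² − 2t₂ξ₁/ξ₂. -/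

import Mathlib

set_option maxHeartbeats 1600000


/-- Under the change of variables
`(ξ₁,ξ₂,ξ₃,ξ₄) = (1/q₁, q₂/q₁², 4q₂p₂ + 4q₂/q₁, p₁q₁² + q₂ + 2p₂q₁q₂)`, the
Hamiltonian system for the Garnier system of type 5/2+3/2 (with
`H₁ = p₁² − (q₁²+t₁)p₁ − 2p₂q₁q₂ − q₂ − t₂/q₂`, `t₂` constant) transforms into the
stated rational system for `(ξ₁,ξ₂,ξ₃,ξ₄)`. -/
theorem stmt12 (ℏ t₂ : ℂ) (hℏ : ℏ ≠ 0) (ht₂ : t₂ ≠ 0)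
    (q1 q2 p1 p2 : ℂ → ℂ)
    (hq1d : Differentiable ℂ q1) (hq2d : Differentiable ℂ q2)
    (hp1d : Differentiable ℂ p1) (hp2d : Differentiable ℂ p2)
    (hq1 : ∀ t, q1 t ≠ 0) (hq2 : ∀ t, q2 t ≠ 0)
    (hH1 : ∀ t, ℏ * deriv q1 t = 2 * p1 t - (q1 t) ^ 2 - t)
    (hH2 : ∀ t, ℏ * deriv q2 t = -2 * q1 t * q2 t)
    (hH3 : ∀ t, ℏ * deriv p1 t = 2 * q1 t * p1 t + 2 * p2 t * q2 t)
    (hH4 : ∀ t, ℏ * deriv p2 t = 2 * p2 t * q1 t + 1 - t₂ / (q2 t) ^ 2)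
    (ξ1 ξ2 ξ3 ξ4 : ℂ → ℂ)
    (hξ1 : ξ1 = fun t => 1 / q1 t)
    (hξ2 : ξ2 = fun t => q2 t / (q1 t) ^ 2)
    (hξ3 : ξ3 = fun t => 4 * q2 t * p2 t + 4 * q2 t / q1 t)
    (hξ4 : ξ4 = fun t => p1 t * (q1 t) ^ 2 + q2 t + 2 * p2 t * q1 t * q2 t) :
    ∀ t,
      ℏ * deriv ξ1 t = 1 + t * (ξ1 t) ^ 2 - 2 * (ξ1 t) ^ 2 * ξ2 t
        + (ξ1 t) ^ 3 * ξ3 t - 2 * (ξ1 t) ^ 4 * ξ4 t ∧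
      ℏ * deriv ξ2 t = 2 * t * ξ1 t * ξ2 t - 4 * ξ1 t * (ξ2 t) ^ 2
        + 2 * (ξ1 t) ^ 2 * ξ2 t * ξ3 t - 4 * (ξ1 t) ^ 3 * ξ2 t * ξ4 t ∧
      ℏ * deriv ξ3 t = 4 * t * ξ2 t - 8 * (ξ2 t) ^ 2 + 4 * ξ1 t * ξ2 t * ξ3 t
        - 8 * (ξ1 t) ^ 2 * ξ2 t * ξ4 t - 4 * t₂ * (ξ1 t) ^ 2 / ξ2 t ∧
      ℏ * deriv ξ4 t = t * ξ3 t / 2 + ξ1 t * (ξ3 t) ^ 2 / 2 - ξ2 t * ξ3 t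
        - 2 * t * ξ1 t * ξ4 t + 4 * ξ1 t * ξ2 t * ξ4 t
        - 3 * (ξ1 t) ^ 2 * ξ3 t * ξ4 t + 4 * (ξ1 t) ^ 3 * (ξ4 t) ^ 2
        - 2 * t₂ * ξ1 t / ξ2 t := by
  intro t
  have hq1' := (hq1d t).hasDerivAt
  have hq2' := (hq2d t).hasDerivAt
  have hp1' := (hp1d t).hasDerivAt
  have hp2' := (hp2d t).hasDerivAt
  have d1 : deriv q1 t = (2 * p1 t - (q1 t) ^ 2 - t) / ℏ := by
    rw [eq_div_iff hℏ]; linear_combination hH1 t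
  have d2 : deriv q2 t = (-2 * q1 t * q2 t) / ℏ := by
    rw [eq_div_iff hℏ]; linear_combination hH2 t
  have d3 : deriv p1 t = (2 * q1 t * p1 t + 2 * p2 t * q2 t) / ℏ := by
    rw [eq_div_iff hℏ]; linear_combination hH3 t
  have d4 : deriv p2 t = (2 * p2 t * q1 t + 1 - t₂ / (q2 t) ^ 2) / ℏ := by
    rw [eq_div_iff hℏ]; linear_combination hH4 t
  have hq1p : (q1 t) ^ 2 ≠ 0 := pow_ne_zero 2 (hq1 t)
  have hi1 : q1 t * (q1 t)⁻¹ = 1 := mul_inv_cancel₀ (hq1 t)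
  have hi2 : q2 t * (q2 t)⁻¹ = 1 := mul_inv_cancel₀ (hq2 t)
  have hih : ℏ * ℏ⁻¹ = 1 := mul_inv_cancel₀ hℏ
  subst hξ1 hξ2 hξ3 hξ4
  refine ⟨?_, ?_, ?_, ?_⟩
  · have h : HasDerivAt (fun t => 1 / q1 t)
        ((0 * q1 t - 1 * deriv q1 t) / (q1 t) ^ 2) t :=
      (hasDerivAt_const t 1).div hq1' (hq1 t)
    rw [h.deriv, d1]
    simp only [one_div, div_eq_mul_inv, mul_inv, inv_inv, ← inv_pow]
    linear_combination ((1:ℂ) * (ℏ) * (ℏ⁻¹) + (2:ℂ) * (p1 t) * ((q1 t)⁻¹)^2 + (4:ℂ) * (q2 t) * (p2 t) * ((q1 t)⁻¹)^3 + (1:ℂ) * (q1 t) * (ℏ) * ((q1 t)⁻¹) * (ℏ⁻¹) + (2:ℂ) * (q1 t) * (p1 t) * ((q1 t)⁻¹)^3) * hi1 + (0:ℂ) * hi2 + ((1:ℂ) + (1:ℂ) * (t) * ((q1 t)⁻¹)^2 + (-2:ℂ) * (p1 t) * ((q1 t)⁻¹)^2) * hih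
  · have h : HasDerivAt (fun t => q2 t / (q1 t) ^ 2)
        ((deriv q2 t * (q1 t) ^ 2 - q2 t * (2 * (q1 t) ^ 1 * deriv q1 t)) /
          ((q1 t) ^ 2) ^ 2) t := hq2'.div (hq1'.pow 2) hq1p
    rw [h.deriv, d1, d2]
    simp only [one_div, div_eq_mul_inv, mul_inv, inv_inv, ← inv_pow]
    linear_combination ((2:ℂ) * (q2 t) * (ℏ) * (t) * ((q1 t)⁻¹)^3 * (ℏ⁻¹) + (4:ℂ) * (q2 t) * (p1 t) * ((q1 t)⁻¹)^3 + (-4:ℂ) * (q2 t) * (p1 t) * (ℏ) * ((q1 t)⁻¹)^3 * (ℏ⁻¹) + (8:ℂ) * (q2 t)^2 * (p2 t) * ((q1 t)⁻¹)^4 + (4:ℂ) * (q1 t) * (q2 t) * (p1 t) * ((q1 t)⁻¹)^4) * hi1 + (0:ℂ) * hi2 + ((2:ℂ) * (q2 t) * (t) * ((q1 t)⁻¹)^3 + (-4:ℂ) * (q2 t) * (p1 t) * ((q1 t)⁻¹)^3) * hih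
  · have h : HasDerivAt (fun t => 4 * q2 t * p2 t + 4 * q2 t / q1 t)
        ((4 * deriv q2 t) * p2 t + (4 * q2 t) * deriv p2 t +
          ((4 * deriv q2 t) * q1 t - (4 * q2 t) * deriv q1 t) / (q1 t) ^ 2) t := by
      have a := ((hasDerivAt_const t (4:ℂ)).mul hq2').mul hp2'
      have b := ((hasDerivAt_const t (4:ℂ)).mul hq2').div hq1' (hq1 t)
      exact (a.add b).congr_deriv (by simp only [Pi.mul_apply, Pi.pow_apply]; ring)
    rw [h.deriv, d1, d2, d4]
    simp only [one_div, div_eq_mul_inv, mul_inv, inv_inv, ← inv_pow]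
    linear_combination ((4:ℂ) * (t₂) * ((q2 t)⁻¹) + (-4:ℂ) * (q2 t) * (ℏ) * (ℏ⁻¹) + (8:ℂ) * (q2 t) * (p1 t) * ((q1 t)⁻¹)^2 + (16:ℂ) * (q2 t)^2 * (p2 t) * ((q1 t)⁻¹)^3 + (4:ℂ) * (q1 t) * (t₂) * ((q1 t)⁻¹) * ((q2 t)⁻¹) + (-4:ℂ) * (q1 t) * (q2 t) * (ℏ) * ((q1 t)⁻¹) * (ℏ⁻¹) + (8:ℂ) * (q1 t) * (q2 t) * (p1 t) * ((q1 t)⁻¹)^3) * hi1 + ((-4:ℂ) * (ℏ) * (t₂) * ((q2 t)⁻¹) * (ℏ⁻¹)) * hi2 + ((-4:ℂ) * (t₂) * ((q2 t)⁻¹) + (4:ℂ) * (q2 t) * (t) * ((q1 t)⁻¹)^2 + (-8:ℂ) * (q2 t) * (p1 t) * ((q1 t)⁻¹)^2) * hih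
  · have h : HasDerivAt (fun t => p1 t * (q1 t) ^ 2 + q2 t + 2 * p2 t * q1 t * q2 t)
        (deriv p1 t * (q1 t) ^ 2 + p1 t * (2 * q1 t * deriv q1 t) + deriv q2 t +
          ((2 * deriv p2 t * q1 t + 2 * p2 t * deriv q1 t) * q2 t +
            2 * p2 t * q1 t * deriv q2 t)) t := by
      have a := hp1'.mul (hq1'.pow 2)
      have b := (((hasDerivAt_const t (2:ℂ)).mul hp2').mul hq1').mul hq2'
      exact ((a.add hq2').add b).congr_deriv (by simp only [Pi.mul_apply, Pi.pow_apply]; ring)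
    rw [h.deriv, d1, d2, d3, d4]
    simp only [one_div, div_eq_mul_inv, mul_inv, inv_inv, ← inv_pow]
    linear_combination ((4:ℂ) * (q2 t) * (p2 t) * (t) + (-4:ℂ) * (q2 t) * (p1 t) * (p2 t) + (8:ℂ) * (q2 t)^2 * (p2 t)^2 * ((q1 t)⁻¹) + (2:ℂ) * (q1 t) * (t₂) * ((q2 t)⁻¹) + (2:ℂ) * (q1 t) * (p1 t) * (t) + (-4:ℂ) * (q1 t) * (p1 t)^2 + (-4:ℂ) * (q1 t) * (q2 t) * (p1 t) * (p2 t) * ((q1 t)⁻¹) + (-16:ℂ) * (q1 t) * (q2 t)^2 * (p2 t)^2 * ((q1 t)⁻¹)^2 + (-4:ℂ) * (q1 t)^2 * (p1 t)^2 * ((q1 t)⁻¹) + (-16:ℂ) * (q1 t)^2 * (q2 t) * (p1 t) * (p2 t) * ((q1 t)⁻¹)^2 + (-4:ℂ) * (q1 t)^3 * (p1 t)^2 * ((q1 t)⁻¹)^2) * hi1 + ((-2:ℂ) * (q1 t) * (ℏ) * (t₂) * ((q2 t)⁻¹) * (ℏ⁻¹)) * hi2 + ((-2:ℂ) * (q2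 t) * (p2 t) * (t) + (4:ℂ) * (q2 t) * (p1 t) * (p2 t) + (-2:ℂ) * (q1 t) * (t₂) * ((q2 t)⁻¹) + (-2:ℂ) * (q1 t) * (p1 t) * (t) + (4:ℂ) * (q1 t) * (p1 t)^2) * hih
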